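/- Let K ⊆ 𝕋V be an isotropic subspace such that pr₁ restricted to K is injective, and let W ⊆ 𝕋V be a subspace with K ⊆ W ⊆ K^⊥, dim W = dim V, and ⟨w, w⟩ > 0 for every w ∈ W with w ∉ K (a fibrewise pre-K-transverse generalised metric). Then there is a unique pair (g, b) of bilinear forms on V with g symmetric and b alternating such that W = gr(g + b); moreover g is positive semidefinite, its radical {v ∈ V : g(v, w) = 0 for all w ∈ V} equals pr₁(K), g(v, v) > 0 for every v ∉ pr₁(K), and K = {(u, b(u, ·)) : u ∈ pr₁(K)}. -/

import Mathlib

/-- The hyperbolic pairing on the double `𝕋V = V × V*`: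
`⟨(v, α), (w, β)⟩ = α(w) + β(v)`. -/
noncomputable def hyp (V : Type*) [AddCommGroup V] [Module ℝ V] :
    LinearMap.BilinForm ℝ (V × Module.Dual ℝ V) :=
  LinearMap.mk₂ ℝ (fun x y => x.2 y.1 + y.2 x.1)
    (fun x x' y => by
      simp only [Prod.fst_add, Prod.snd_add, LinearMap.add_apply, map_add]; ring)
    (fun c x y => by
      simp only [Prod.smul_fst, Prod.smul_snd, LinearMap.smul_apply, map_smul, smul_eq_mul]; ring)
    (fun x y y' => by
      simp only [Prod.fst_add, Prod.snd_add, LinearMap.add_apply, map_add]; ring)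
    (fun c x y => by
      simp only [Prod.smul_fst, Prod.smul_snd, LinearMap.smul_apply, map_smul, smul_eq_mul]; ring)

/-- A fibrewise pre-`K`-transverse generalised metric `W` is the graph of a unique pair
`(g, b)` with `g` symmetric and `b` alternating; moreover `g` is positive semidefinite with
radical `pr₁(K)`, positive on the complement of `pr₁(K)`, and
`K = {(u, b(u, ·)) : u ∈ pr₁(K)}`. -/
lemma hyp_apply {V : Type*} [AddCommGroup V] [Module ℝ V]
    (x y : V × Module.Dual ℝ V) : hyp V x y = x.2 y.1 + y.2 x.1 := rfl

lemma graph_inj' {R M N : Type*} [Ring R] [AddCommGroup M] [Module R M]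
    [AddCommGroup N] [Module R N] {f g : M →ₗ[R] N}
    (h : LinearMap.graph f = LinearMap.graph g) : f = g := by
  ext v
  have : (v, f v) ∈ LinearMap.graph g := by
    rw [← h, LinearMap.mem_graph_iff]
  have h2 := (LinearMap.mem_graph_iff g (v, f v)).1 this
  simpa using h2

lemma alt_anti {V : Type*} [AddCommGroup V] [Module ℝ V]
    {c : LinearMap.BilinForm ℝ V} (hc : ∀ v, c v v = 0) (v w : V) :
    c w v = - c v w := by
  have := hc (v + w)
  simp only [map_add, LinearMap.add_apply, hc v, hc w] at this
  linarith

lemma decomp_unique {V : Type*} [AddCommGroup V] [Module ℝ V]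
    {g b g' b' : LinearMap.BilinForm ℝ V}
    (hg : ∀ v w, g v w = g w v) (hb : ∀ v, b v v = 0)
    (hg' : ∀ v w, g' v w = g' w v) (hb' : ∀ v, b' v v = 0)
    (h : g + b = g' + b') : g = g' ∧ b = b' := by
  have happ : ∀ v w, g v w + b v w = g' v w + b' v w := by
    intro v w
    have := LinearMap.congr_fun (LinearMap.congr_fun h v) w
    simpa using this
  have hgg : ∀ v w, g v w = g' v w := by
    intro v w
    have h1 := happ v w
    have h2 := happ w v
    rw [hg w v, hg' w v, alt_anti hb v w, alt_anti hb' v w] at h2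
    linarith
  have hgeq : g = g' := by ext v w; exact hgg v w
  refine ⟨hgeq, ?_⟩
  ext v w
  have := happ v w
  rw [hgg v w] at this
  simpa using this

theorem stmt16 (V : Type*) [AddCommGroup V] [Module ℝ V] [FiniteDimensional ℝ V]
    (K W : Submodule ℝ (V × Module.Dual ℝ V))
    (hKiso : K ≤ LinearMap.BilinForm.orthogonal (hyp V) K)
    (hKinj : ∀ x ∈ K, ∀ y ∈ K, x.1 = y.1 → x = y)
    (hKW : K ≤ W) (hWK : W ≤ LinearMap.BilinForm.orthogonal (hyp V) K)
    (hdim : Module.finrank ℝ W = Module.finrank ℝ V)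
    (hpos : ∀ x ∈ W, x ∉ K → 0 < hyp V x x) :
    (∃! p : LinearMap.BilinForm ℝ V × LinearMap.BilinForm ℝ V,
        (∀ v w, p.1 v w = p.1 w v) ∧ (∀ v, p.2 v v = 0) ∧
        W = LinearMap.graph (p.1 + p.2)) ∧
    (∀ g b : LinearMap.BilinForm ℝ V, (∀ v w, g v w = g w v) → (∀ v, b v v = 0) →
      W = LinearMap.graph (g + b) →
      ((∀ v : V, 0 ≤ g v v) ∧
        {v : V | ∀ w, g v w = 0}
          = ↑(Submodule.map (LinearMap.fst ℝ V (Module.Dual ℝ V)) K) ∧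
        (∀ v : V, v ∉ Submodule.map (LinearMap.fst ℝ V (Module.Dual ℝ V)) K → 0 < g v v) ∧
        (∀ x : V × Module.Dual ℝ V,
          x ∈ K ↔ x.1 ∈ Submodule.map (LinearMap.fst ℝ V (Module.Dual ℝ V)) K ∧
            x.2 = b x.1))) := by
  classical
  -- pr₁ is injective on W
  have hWfst : ∀ x ∈ W, x.1 = 0 → x = 0 := by
    intro x hx h1
    have hxK : x ∈ K := by
      by_contra hxk
      have hp := hpos x hx hxk
      rw [hyp_apply, h1] at hp
      simp at hp
    exact hKinj x hxK 0 K.zero_mem (by simp [h1])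
  -- the restricted first projection
  set φ : W →ₗ[ℝ] V := (LinearMap.fst ℝ V (Module.Dual ℝ V)).comp W.subtype with hφ
  have hφinj : Function.Injective φ := by
    intro x y hxy
    have hz : φ (x - y) = 0 := by
      have := map_sub φ x y
      rw [this, hxy, sub_self]
    have hsub : ((x - y : W) : V × Module.Dual ℝ V).1 = 0 := hz
    have h0 : ((x - y : W) : V × Module.Dual ℝ V) = 0 := hWfst _ (x - y).2 hsub
    have : (x - y : W) = 0 := Subtype.ext h0
    exact sub_eq_zero.mp this
  have hφsurj : Function.Surjective φ := by
    rw [← LinearMap.range_eq_top]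
    apply Submodule.eq_top_of_finrank_eq
    rw [LinearMap.finrank_range_of_inj hφinj, hdim]
  let e : W ≃ₗ[ℝ] V := LinearEquiv.ofBijective φ ⟨hφinj, hφsurj⟩
  let A : V →ₗ[ℝ] Module.Dual ℝ V :=
    ((LinearMap.snd ℝ V (Module.Dual ℝ V)).comp W.subtype).comp e.symm.toLinearMap
  have hA : ∀ x ∈ W, A x.1 = x.2 := by
    intro x hx
    have : e.symm (e ⟨x, hx⟩) = ⟨x, hx⟩ := e.symm_apply_apply _
    have he : e ⟨x, hx⟩ = x.1 := rfl
    show ((e.symm x.1 : W) : V × Module.Dual ℝ V).2 = x.2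
    rw [← he, this]
  have hgraphA : W = LinearMap.graph A := by
    ext x
    rw [LinearMap.mem_graph_iff]
    constructor
    · intro hx; exact (hA x hx).symm
    · intro hx
      have hy : ((e.symm x.1 : W) : V × Module.Dual ℝ V) ∈ W := (e.symm x.1).2
      have h1 : ((e.symm x.1 : W) : V × Module.Dual ℝ V).1 = x.1 :=
        e.apply_symm_apply x.1
      have h2 : ((e.symm x.1 : W) : V × Module.Dual ℝ V).2 = x.2 := by
        rw [hx]; rfl
      have : x = ((e.symm x.1 : W) : V × Module.Dual ℝ V) := Prod.ext h1.symm h2.symm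
      rw [this]; exact hy
  -- the symmetric and alternating parts
  set B : LinearMap.BilinForm ℝ V := A with hB
  set g₀ : LinearMap.BilinForm ℝ V := (1/2 : ℝ) • (B + B.flip) with hg₀
  set b₀ : LinearMap.BilinForm ℝ V := (1/2 : ℝ) • (B - B.flip) with hb₀
  have hsum : g₀ + b₀ = B := by
    ext v w
    show (1/2 : ℝ) * (B v w + B w v) + (1/2 : ℝ) * (B v w - B w v) = B v w
    ring
  have hg₀sym : ∀ v w, g₀ v w = g₀ w v := by
    intro v w
    show (1/2 : ℝ) * (B v w + B w v) = (1/2 : ℝ) * (B w v + B v w)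
    ring
  have hb₀alt : ∀ v, b₀ v v = 0 := by
    intro v
    show (1/2 : ℝ) * (B v v - B v v) = 0
    ring
  have hgraph₀ : W = LinearMap.graph (g₀ + b₀) := by rw [hsum]; exact hgraphA
  constructor
  · refine ⟨(g₀, b₀), ⟨hg₀sym, hb₀alt, hgraph₀⟩, ?_⟩
    rintro ⟨g', b'⟩ ⟨hg', hb', hgr'⟩
    have heq : g' + b' = g₀ + b₀ := graph_inj' (hgr'.symm.trans hgraph₀)
    obtain ⟨h1, h2⟩ := decomp_unique hg' hb' hg₀sym hb₀alt heq
    exact Prod.ext h1 h2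
  · intro g b hgsym hbalt hgr
    have hbanti : ∀ v w, b w v = - b v w := alt_anti hbalt
    have memW : ∀ v : V, (v, (g + b) v) ∈ W := by
      intro v; rw [hgr, LinearMap.mem_graph_iff]
    have hxW : ∀ x ∈ W, x.2 = (g + b) x.1 := by
      intro x hx; rw [hgr, LinearMap.mem_graph_iff] at hx; exact hx
    have hyp_self : ∀ v : V, hyp V (v, (g + b) v) (v, (g + b) v) = 2 * g v v := by
      intro v
      rw [hyp_apply]
      simp only [LinearMap.add_apply, hbalt v]
      ring
    -- membership in K of a graph point gives g v v = 0
    have hKzero : ∀ x ∈ K, hyp V x x = 0 := by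
      intro x hx
      exact (hKiso hx) x hx
    have hge : ∀ v : V, 0 ≤ g v v := by
      intro v
      by_cases hk : (v, (g + b) v) ∈ K
      · have := hKzero _ hk
        rw [hyp_self] at this
        linarith
      · have := hpos _ (memW v) hk
        rw [hyp_self] at this
        linarith
    -- v ∈ pr₁ K → g v = 0
    have hrad : ∀ v, v ∈ Submodule.map (LinearMap.fst ℝ V (Module.Dual ℝ V)) K →
        ∀ w, g v w = 0 := by
      intro v hv w
      obtain ⟨y, hyK, hy1⟩ := hv
      simp only [LinearMap.fst_apply] at hy1
      have hyW : y ∈ W := hKW hyK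
      have horth := (hWK (memW w)) y hyK
      rw [hyp_apply] at horth
      have hy2 : y.2 = (g + b) y.1 := hxW y hyW
      have horth' : g v w + b v w + (g w v + b w v) = 0 := by
        have h1 : y.2 w + ((g + b) w) y.1 = 0 := horth
        rw [hy2, hy1] at h1
        simp only [LinearMap.add_apply] at h1
        linarith
      rw [hgsym w v, hbanti v w] at horth'
      linarith
    have hposc : ∀ v : V, v ∉ Submodule.map (LinearMap.fst ℝ V (Module.Dual ℝ V)) K →
        0 < g v v := by
      intro v hv
      have hk : (v, (g + b) v) ∉ K := by
        intro hk
        exact hv ⟨(v, (g + b) v), hk, rfl⟩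
      have := hpos _ (memW v) hk
      rw [hyp_self] at this
      linarith
    have hradset : {v : V | ∀ w, g v w = 0}
        = ↑(Submodule.map (LinearMap.fst ℝ V (Module.Dual ℝ V)) K) := by
      ext v
      simp only [Set.mem_setOf_eq, SetLike.mem_coe]
      constructor
      · intro h
        by_contra hv
        have := hposc v hv
        rw [h v] at this
        exact lt_irrefl 0 this
      · exact hrad v
    have hKchar : ∀ x : V × Module.Dual ℝ V,
        x ∈ K ↔ x.1 ∈ Submodule.map (LinearMap.fst ℝ V (Module.Dual ℝ V)) K ∧
          x.2 = b x.1 := by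
      have fwd : ∀ x ∈ K, x.2 = b x.1 := by
        intro x hx
        have hxW' : x ∈ W := hKW hx
        have h2 : x.2 = (g + b) x.1 := hxW x hxW'
        have hx1 : x.1 ∈ Submodule.map (LinearMap.fst ℝ V (Module.Dual ℝ V)) K :=
          ⟨x, hx, rfl⟩
        ext w
        have := hrad x.1 hx1 w
        rw [h2]
        simp only [LinearMap.add_apply, this, zero_add]
      intro x
      constructor
      · intro hx
        exact ⟨⟨x, hx, rfl⟩, fwd x hx⟩
      · rintro ⟨⟨y, hyK, hy1⟩, hx2⟩
        simp only [LinearMap.fst_apply] at hy1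
        have hy2 : y.2 = b y.1 := fwd y hyK
        have : x = y := by
          apply Prod.ext
          · exact hy1.symm
          · rw [hx2, ← hy1, hy2]
        rw [this]; exact hyK
    exact ⟨hge, hradset, hposc, hKchar⟩
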